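/- Let G be a connected graph, A ⊆ G a regular non-empty set, and B₁, B₂ ⊆ ∂A with B₁ ∪ B₂ = ∂A and B₁ ∩ B₂ = ∅. Suppose A has consistent complement relative to B₁ and to B₂. Then the sets G₁ = σ_{B₁}(A), G₂ = A, G₃ = σ_{B₂}(A) satisfy: (i) each Gᵢ is regular and non-empty; (ii) G₁ ∪ G₃ = G and G₂ = G₁ ∩ G₃; (iii) closure(G₁ \ G₂) ∩ closure(G₃ \ G₂) = ∅. -/

import Mathlib

open Set Topology

/-- A subset of a space is *regular* if it is closed and has finitely many connected
components, each of which is non-degenerate. -/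
def IsRegularSet {G : Type*} [TopologicalSpace G] (A : Set G) : Prop :=
  IsClosed A ∧ {C : Set G | ∃ x ∈ A, C = connectedComponentIn A x}.Finite ∧
    ∀ x ∈ A, (connectedComponentIn A x).Nontrivial

/-- A point of a graph is *ordinary* (neither a branch point nor an endpoint) if it has an
open neighborhood homeomorphic to an open interval. -/
def IsOrdinaryPoint {G : Type*} [TopologicalSpace G] (x : G) : Prop :=
  ∃ U : Set G, IsOpen U ∧ x ∈ U ∧ Nonempty (U ≃ₜ Set.Ioo (0 : ℝ) 1)

/-- A topological space is a *graph* if it is a finite union of arcs which intersect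
at most in endpoints. -/
def IsGraphSpace (G : Type*) [TopologicalSpace G] : Prop :=
  ∃ (n : ℕ) (f : Fin n → unitInterval → G),
    (∀ i, Continuous (f i) ∧ Function.Injective (f i)) ∧
    (⋃ i, Set.range (f i)) = Set.univ ∧
    ∀ i j, i ≠ j →
      Set.range (f i) ∩ Set.range (f j) ⊆ ({f i 0, f i 1} : Set G) ∩ {f j 0, f j 1}

/-- A subset of a space is a *graph* if it is a finite union of arcs which intersect
at most in endpoints. -/
def IsGraphSet {E : Type*} [TopologicalSpace E] (G : Set E) : Prop :=
  ∃ (n : ℕ) (f : Fin n → unitInterval → E),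
    (∀ i, Continuous (f i) ∧ Function.Injective (f i)) ∧
    G = ⋃ i, Set.range (f i) ∧
    ∀ i j, i ≠ j →
      Set.range (f i) ∩ Set.range (f j) ⊆ ({f i 0, f i 1} : Set E) ∩ {f j 0, f j 1}

/-- `φ` restricted to `A` is a homeomorphism onto `B`. -/
def MapsHomeoOnto {F G : Type*} [TopologicalSpace F] [TopologicalSpace G]
    (φ : F → G) (A : Set F) (B : Set G) : Prop :=
  φ '' A = B ∧ Topology.IsEmbedding (A.restrict φ)

/-- A *simple fold* on `G`, with pieces `F1, F2, F3` of `F` and projection `φ : F → G`,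
satisfying properties (F1)-(F5). -/
def IsSimpleFold {F G : Type*} [TopologicalSpace F] [TopologicalSpace G]
    (φ : F → G) (F1 F2 F3 : Set F) : Prop :=
  Continuous φ ∧ F1 ∪ F2 ∪ F3 = Set.univ ∧
  -- (F1)
  ((φ '' F1).Nonempty ∧ (φ '' F2).Nonempty ∧ (φ '' F3).Nonempty) ∧
  (IsRegularSet (φ '' F1) ∧ IsRegularSet (φ '' F2) ∧ IsRegularSet (φ '' F3)) ∧
  -- (F2)
  (φ '' F1) ∪ (φ '' F3) = Set.univ ∧ (φ '' F2) = (φ '' F1) ∩ (φ '' F3) ∧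
  -- (F3)
  closure ((φ '' F1) \ (φ '' F2)) ∩ closure ((φ '' F3) \ (φ '' F2)) = ∅ ∧
  -- (F4)
  (MapsHomeoOnto φ F1 (φ '' F1) ∧ MapsHomeoOnto φ F2 (φ '' F2) ∧
    MapsHomeoOnto φ F3 (φ '' F3)) ∧
  -- (F5)
  frontier (φ '' F1) = φ '' (F1 ∩ F2) ∧ frontier (φ '' F3) = φ '' (F2 ∩ F3) ∧
  F1 ∩ F3 = ∅

/-- `S` separates `A` from `B` within `Y`: the complement `Y \ S` is the union of two
disjoint sets, relatively open in `Y \ S`, containing `A` and `B` respectively. -/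
def SeparatesWithin {E : Type*} [TopologicalSpace E] (Y S A B : Set E) : Prop :=
  ∃ U V : Set E,
    U ∪ V = Y \ S ∧ U ∩ V = ∅ ∧ A ⊆ U ∧ B ⊆ V ∧
    (∃ U', IsOpen U' ∧ U = (Y \ S) ∩ U') ∧ (∃ V', IsOpen V' ∧ V = (Y \ S) ∩ V')

/-- `A` has *consistent complement relative to* `B`: for each component `C` of the
complement of `A`, either `∂C ⊆ B` or `∂C ∩ B = ∅`. -/
def ConsistentComplement {G : Type*} [TopologicalSpace G] (A B : Set G) : Prop :=
  ∀ x ∉ A, frontier (connectedComponentIn Aᶜ x) ⊆ B ∨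
    frontier (connectedComponentIn Aᶜ x) ∩ B = ∅

/-- The *`A` side of `B`*, `σ_B(A)`: the closure of the union of all components of
`G \ B` meeting `A`. -/
def sideOf {G : Type*} [TopologicalSpace G] (B A : Set G) : Set G :=
  closure (⋃ x ∈ {x : G | x ∉ B ∧ (connectedComponentIn Bᶜ x ∩ A).Nonempty},
    connectedComponentIn Bᶜ x)

/-- A subset of `G × [0,1]` is *straight* if it is closed, the projection is injective on
it, and its projection is regular. -/
def IsStraight {G : Type*} [TopologicalSpace G] (S : Set (G × unitInterval)) : Prop :=
  IsClosed S ∧ Set.InjOn Prod.fst S ∧ IsRegularSet (Prod.fst '' S)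

/-- The *end set* of a straight set. -/
def endSet {G : Type*} [TopologicalSpace G] (S : Set (G × unitInterval)) :
    Set (G × unitInterval) :=
  S ∩ Prod.fst ⁻¹' (frontier (Prod.fst '' S))

/-- A *stairwell structure* of height `k` for `S ⊆ G × [0,1]`, given by the pieces
`Sp 1, …, Sp k` with end set decompositions `E(Sp i) = α i ∪ β i`. -/
def IsStairwell {G : Type*} [TopologicalSpace G]
    (Sp α β : ℕ → Set (G × unitInterval)) (k : ℕ) (S : Set (G × unitInterval)) : Prop :=
  1 ≤ k ∧
  -- (S1)
  (∀ i ∈ Set.Icc 1 k, (Sp i).Nonempty ∧ IsStraight (Sp i)) ∧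
  S = ⋃ i ∈ Set.Icc 1 k, Sp i ∧
  -- (S2)
  (∀ i ∈ Set.Icc 1 k, endSet (Sp i) = α i ∪ β i ∧ α i ∩ β i = ∅ ∧
    (α i).Finite ∧ (β i).Finite) ∧
  α 1 = ∅ ∧ β k = ∅ ∧ (∀ i, 1 ≤ i → i < k → β i = α (i + 1)) ∧
  -- (S3)
  (∀ i, 1 ≤ i → i < k → ∃ V : Set G, IsOpen V ∧ Prod.fst '' β i ⊆ V ∧
    Prod.fst '' Sp i ∩ V = Prod.fst '' Sp (i + 1) ∩ V) ∧
  -- (S4)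
  (∀ i ∈ Set.Icc 1 k, ConsistentComplement (Prod.fst '' Sp i) (Prod.fst '' α i) ∧
    ConsistentComplement (Prod.fst '' Sp i) (Prod.fst '' β i)) ∧
  -- (S5)
  (∀ i ∈ Set.Icc 2 k, ∀ p ∈ α i, IsOrdinaryPoint p.1) ∧
  (∀ i j, 2 ≤ i → i < j → j ≤ k → Prod.fst '' α i ∩ Prod.fst '' α j = ∅)

/-- A *broken stairwell structure* of height `k` with a pit at level `i0`. -/
def IsBrokenStairwell {G : Type*} [TopologicalSpace G]
    (Sp α β : ℕ → Set (G × unitInterval)) (γ P1 P2 : Set (G × unitInterval))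
    (k i0 : ℕ) (S : Set (G × unitInterval)) : Prop :=
  1 ≤ k ∧ 1 ≤ i0 ∧ i0 ≤ k ∧
  -- (S1')
  (∀ i ∈ Set.Icc 1 k, (Sp i).Nonempty ∧ IsStraight (Sp i)) ∧
  P1.Nonempty ∧ IsStraight P1 ∧ P2.Nonempty ∧ IsStraight P2 ∧
  S = (⋃ i ∈ Set.Icc 1 k, Sp i) ∪ P1 ∪ P2 ∧
  -- (S2')
  (∀ i ∈ Set.Icc 1 k, i ≠ i0 → endSet (Sp i) = α i ∪ β i) ∧
  endSet (Sp i0) = α i0 ∪ β i0 ∪ γ ∧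
  (∀ i ∈ Set.Icc 1 k, α i ∩ β i = ∅ ∧ (α i).Finite ∧ (β i).Finite) ∧
  γ.Finite ∧ α i0 ∩ γ = ∅ ∧ β i0 ∩ γ = ∅ ∧
  α 1 = ∅ ∧ β k = ∅ ∧ (∀ i, 1 ≤ i → i < k → β i = α (i + 1)) ∧
  endSet P2 = endSet P1 ∪ γ ∧ endSet P1 ∩ γ = ∅ ∧
  -- (S3')
  (∀ i, 1 ≤ i → i < k → ∃ V : Set G, IsOpen V ∧ Prod.fst '' β i ⊆ V ∧
    Prod.fst '' Sp i ∩ V = Prod.fst '' Sp (i + 1) ∩ V) ∧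
  (∃ V : Set G, IsOpen V ∧ Prod.fst '' endSet P1 ⊆ V ∧
    Prod.fst '' P1 ∩ V = Prod.fst '' P2 ∩ V) ∧
  (∃ W : Set G, IsOpen W ∧ Prod.fst '' γ ⊆ W ∧
    Prod.fst '' P2 ∩ W = Prod.fst '' Sp i0 ∩ W) ∧
  -- (S4')
  (∀ i ∈ Set.Icc 1 k, ConsistentComplement (Prod.fst '' Sp i) (Prod.fst '' α i) ∧
    ConsistentComplement (Prod.fst '' Sp i) (Prod.fst '' β i)) ∧
  ConsistentComplement (Prod.fst '' Sp i0) (Prod.fst '' γ) ∧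
  ConsistentComplement (Prod.fst '' P2) (Prod.fst '' endSet P1) ∧
  ConsistentComplement (Prod.fst '' P2) (Prod.fst '' γ) ∧
  -- (S5')
  (∀ i ∈ Set.Icc 2 k, ∀ p ∈ α i, IsOrdinaryPoint p.1) ∧
  (∀ p ∈ endSet P1, IsOrdinaryPoint p.1) ∧ (∀ p ∈ γ, IsOrdinaryPoint p.1) ∧
  (∀ i j, 2 ≤ i → i < j → j ≤ k → Prod.fst '' α i ∩ Prod.fst '' α j = ∅) ∧
  (∀ i ∈ Set.Icc 2 k, Prod.fst '' α i ∩ Prod.fst '' endSet P1 = ∅ ∧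
    Prod.fst '' α i ∩ Prod.fst '' γ = ∅) ∧
  Prod.fst '' endSet P1 ∩ Prod.fst '' γ = ∅ ∧
  -- (S6')
  Prod.fst '' α i0 ∩ Prod.fst '' (P1 ∪ P2) = ∅

/-- A compactum is *hereditarily indecomposable* if every non-degenerate subcontinuum is
indecomposable, i.e. is not the union of two proper subcontinua. -/
def HereditarilyIndecomposable (X : Type*) [TopologicalSpace X] : Prop :=
  ∀ K : Set X, IsCompact K → IsConnected K → K.Nontrivial →
    ¬ ∃ A B : Set X, IsCompact A ∧ IsConnected A ∧ IsCompact B ∧ IsConnected B ∧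
      A ∪ B = K ∧ A ≠ K ∧ B ≠ K

/-- A continuum is *arc-like* if for every `ε > 0` it admits an `ε`-map onto `[0,1]`. -/
def ArcLike (X : Type*) [MetricSpace X] : Prop :=
  ∀ ε > (0 : ℝ), ∃ f : X → unitInterval, Continuous f ∧ Function.Surjective f ∧
    ∀ y, Metric.diam (f ⁻¹' {y}) < ε

/-- A continuum has *span zero* if every subcontinuum `Z ⊆ X × X` with
`π₁(Z) ⊆ π₂(Z)` meets the diagonal. -/
def SpanZero (X : Type*) [TopologicalSpace X] : Prop :=
  ∀ Z : Set (X × X), IsCompact Z → IsConnected Z →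
    Prod.fst '' Z ⊆ Prod.snd '' Z → ∃ x, (x, x) ∈ Z



section Generic
variable {X : Type*} [TopologicalSpace X]

lemma isClosed_cci {F : Set X} (hF : IsClosed F) (x : X) :
    IsClosed (connectedComponentIn F x) := by
  rcases em (x ∈ F) with h | h
  · have hsub : closure (connectedComponentIn F x) ⊆ F :=
      hF.closure_subset_iff.mpr (connectedComponentIn_subset F x)
    exact isClosed_of_closure_subset
      ((isPreconnected_connectedComponentIn.closure).subset_connectedComponentIn
        (subset_closure (mem_connectedComponentIn h)) hsub)
  · simp [connectedComponentIn_eq_empty h]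

lemma cci_eq_of_mem_pre {F P : Set X} (hP : IsPreconnected P) (hPF : P ⊆ F) {x y : X}
    (hx : x ∈ P) (hy : y ∈ P) : connectedComponentIn F x = connectedComponentIn F y :=
  (connectedComponentIn_eq (hP.subset_connectedComponentIn hy hPF hx)).symm

lemma comps_finite_of_cover {T : Set X} {P : Set (Set X)} (hfin : P.Finite)
    (hcov : T ⊆ ⋃₀ P) (hsub : ∀ p ∈ P, p ⊆ T ∧ IsPreconnected p) :
    {C | ∃ x ∈ T, C = connectedComponentIn T x}.Finite := by
  have hss : {C | ∃ x ∈ T, C = connectedComponentIn T x} ⊆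
      ⋃ p ∈ P, (connectedComponentIn T) '' p := by
    rintro C ⟨x, hx, rfl⟩
    rcases hcov hx with ⟨p, hp, hxp⟩
    exact mem_biUnion hp ⟨x, hxp, rfl⟩
  refine Set.Finite.subset (hfin.biUnion fun p hp => ?_) hss
  apply Set.Subsingleton.finite
  rintro _ ⟨a, ha, rfl⟩ _ ⟨b, hb, rfl⟩
  exact cci_eq_of_mem_pre (hsub p hp).2 (hsub p hp).1 ha hb

lemma infinite_inter_of_preconnected [T1Space X] {K : Set X} (hK : IsPreconnected K)
    (hnt : K.Nontrivial) {b : X} (hb : b ∈ K) {U : Set X} (hU : IsOpen U) (hbU : b ∈ U) :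
    (U ∩ K).Infinite := by
  by_contra hfin
  rw [Set.not_infinite] at hfin
  obtain ⟨y, hyK, hyb⟩ := hnt.exists_ne b
  have hO : IsOpen (U \ ((U ∩ K) \ {b})) :=
    hU.sdiff ((hfin.subset diff_subset).isClosed)
  have hcov : K ⊆ (U \ ((U ∩ K) \ {b})) ∪ {b}ᶜ := by
    intro z hz
    rcases em (z = b) with rfl | hzb
    · exact Or.inl ⟨hbU, fun hc => hc.2 rfl⟩
    · exact Or.inr hzb
  obtain ⟨z, hzK, hz1, hz2⟩ := hK _ _ hO isOpen_compl_singleton hcov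
    ⟨b, hb, hbU, fun hc => hc.2 rfl⟩ ⟨y, hyK, hyb⟩
  exact hz2 (by_contra fun h => hz1.2 ⟨⟨hz1.1, hzK⟩, h⟩)

lemma closure_diff_finite [T1Space X] {A B : Set X} (hA : IsClosed A)
    (hnt : ∀ x ∈ A, (connectedComponentIn A x).Nontrivial) (hB : B.Finite) :
    closure (A \ B) = A := by
  refine subset_antisymm (closure_minimal diff_subset hA) ?_
  intro b hb
  rw [mem_closure_iff]
  intro O hO hbO
  have hK := infinite_inter_of_preconnected (isPreconnected_connectedComponentIn (F := A) (x := b))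
    (hnt b hb) (mem_connectedComponentIn hb) hO hbO
  obtain ⟨z, hz1, hz2⟩ := ((hK.mono (inter_subset_inter_right _ (connectedComponentIn_subset _ _))).diff hB).nonempty
  exact ⟨z, hz1.1, hz1.2, hz2⟩

lemma nontrivial_of_isOpen [T1Space X] [PreconnectedSpace X]
    (hX : (univ : Set X).Nontrivial) {U : Set X} (hU : IsOpen U) (hne : U.Nonempty) :
    U.Nontrivial := by
  obtain ⟨x, hx⟩ := hne
  by_contra h
  rw [not_nontrivial_iff] at h
  have hU1 : U = {x} := h.eq_singleton_of_mem hx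
  have hcl : IsClopen U := ⟨hU1 ▸ isClosed_singleton, hU⟩
  rcases isClopen_iff.mp hcl with h' | h'
  · exact (h' ▸ hx : x ∈ (∅ : Set X))
  · obtain ⟨a, -, b, -, hab⟩ := hX
    have ha : a ∈ U := h' ▸ mem_univ a
    have hb : b ∈ U := h' ▸ mem_univ b
    rw [hU1] at ha hb
    exact hab (ha.trans hb.symm)

end Generic




/-- The set of connected components of the complement of `A`. -/
def cSet {G : Type*} [TopologicalSpace G] (A : Set G) : Set (Set G) :=
  {C | ∃ x ∉ A, C = connectedComponentIn Aᶜ x}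


section RealLemmas

lemma frontier_finite_of_comps {T : Set ℝ} (hT : IsClosed T) (hTb : T ⊆ Icc 0 1)
    (hcomps : {P | ∃ u ∈ T, P = connectedComponentIn T u}.Finite) :
    (frontier T).Finite := by
  have hsub : frontier T ⊆ ⋃ P ∈ {P | ∃ u ∈ T, P = connectedComponentIn T u},
      ({sInf P, sSup P} : Set ℝ) := by
    intro u hu
    have huT : u ∈ T := hT.frontier_subset hu
    set P := connectedComponentIn T u with hPdef
    have hPclosed : IsClosed P := isClosed_cci hT u
    have hPsub : P ⊆ T := connectedComponentIn_subset _ _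
    have hPcomp : IsCompact P :=
      IsCompact.of_isClosed_subset isCompact_Icc hPclosed (hPsub.trans hTb)
    have hPne : P.Nonempty := ⟨u, mem_connectedComponentIn huT⟩
    have ha := hPcomp.sInf_mem hPne
    have hb := hPcomp.sSup_mem hPne
    have h1 : u = sInf P ∨ u = sSup P := by
      by_contra hc
      push_neg at hc
      have hu1 : sInf P < u :=
        lt_of_le_of_ne (csInf_le hPcomp.bddBelow (mem_connectedComponentIn huT)) (Ne.symm hc.1)
      have hu2 : u < sSup P :=
        lt_of_le_of_ne (le_csSup hPcomp.bddAbove (mem_connectedComponentIn huT)) hc.2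
      have hIoo : Ioo (sInf P) (sSup P) ⊆ P := fun z hz =>
        (isPreconnected_connectedComponentIn.ordConnected).out ha hb ⟨hz.1.le, hz.2.le⟩
      exact hu.2 (mem_interior.mpr
        ⟨Ioo (sInf P) (sSup P), hIoo.trans hPsub, isOpen_Ioo, hu1, hu2⟩)
    refine mem_biUnion ⟨u, huT, rfl⟩ ?_
    rcases h1 with h | h
    · exact Or.inl h
    · exact Or.inr (mem_singleton_iff.mpr h)
  exact (hcomps.biUnion fun _ _ => (finite_singleton _).insert _).subset hsub

lemma comps_finite_of_frontier {S : Set ℝ} (hSb : S ⊆ Icc 0 1) (hfr : (frontier S).Finite) :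
    {P | ∃ u ∈ S, P = connectedComponentIn S u}.Finite := by
  have hbdd : BddBelow S := BddBelow.mono hSb (bddBelow_Icc)
  have hinf : ∀ u ∈ S, sInf (connectedComponentIn S u) ∈ frontier S := by
    intro u hu
    set P := connectedComponentIn S u with hPdef
    have hPsub : P ⊆ S := connectedComponentIn_subset _ _
    have hPne : P.Nonempty := ⟨u, mem_connectedComponentIn hu⟩
    have hPbdd : BddBelow P := hbdd.mono hPsub
    set a := sInf P with hadef
    have hacl : a ∈ closure P := csInf_mem_closure hPne hPbdd
    by_cases haP : a ∈ P
    · by_contra hafr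
      have haS : a ∈ S := hPsub haP
      have haint : a ∈ interior S := by
        rcases em (a ∈ interior S) with h | h
        · exact h
        · exact absurd ⟨subset_closure haS, h⟩ hafr
      obtain ⟨ε, hε, hball⟩ := Metric.mem_nhds_iff.mp (mem_interior_iff_mem_nhds.mp haint)
      have hIocS : Ioc (a - ε) a ⊆ S := by
        intro w hw
        apply hball
        rw [Real.ball_eq_Ioo]
        exact ⟨hw.1, by rcases hw with ⟨h1, h2⟩; linarith⟩
      have hunion : IsPreconnected (Ioc (a - ε) a ∪ P) :=
        IsPreconnected.union a ⟨by linarith, le_refl a⟩ haP isPreconnected_Ioc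
          isPreconnected_connectedComponentIn
      have hsub2 : Ioc (a - ε) a ∪ P ⊆ P := by
        have h3 := hunion.subset_connectedComponentIn (Or.inr (mem_connectedComponentIn hu))
          (union_subset hIocS hPsub)
        rwa [← hPdef] at h3
      have : a - ε/2 ∈ P := hsub2 (Or.inl ⟨by linarith, by linarith⟩)
      have h4 : a ≤ a - ε/2 := csInf_le hPbdd this
      linarith
    · have haS : a ∉ S := by
        intro haS
        have hpc : IsPreconnected (P ∪ {a}) :=
          isPreconnected_connectedComponentIn.subset_closure subset_union_left
            (union_subset subset_closure (singleton_subset_iff.mpr hacl))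
        have h3 : P ∪ {a} ⊆ connectedComponentIn S u :=
          hpc.subset_connectedComponentIn (Or.inl (mem_connectedComponentIn hu))
            (union_subset hPsub (singleton_subset_iff.mpr haS))
        exact haP (h3 (Or.inr rfl))
      exact ⟨closure_mono hPsub hacl, fun h => haS (interior_subset h)⟩
  have hkey : ∀ u ∈ S, ∀ v ∈ S,
      sInf (connectedComponentIn S u) = sInf (connectedComponentIn S v) →
      u ≤ v → connectedComponentIn S u = connectedComponentIn S v := by
    intro u hu v hv heq huv
    set P := connectedComponentIn S u with hPdef
    set Q := connectedComponentIn S v with hQdef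
    have hPsub : P ⊆ S := connectedComponentIn_subset _ _
    have hQsub : Q ⊆ S := connectedComponentIn_subset _ _
    have hPne : P.Nonempty := ⟨u, mem_connectedComponentIn hu⟩
    have hQne : Q.Nonempty := ⟨v, mem_connectedComponentIn hv⟩
    set a := sInf P with hadef
    by_cases haP : a ∈ P
    · -- Q ∪ {a} connects into P
      have hacl : a ∈ closure Q := heq ▸ csInf_mem_closure hQne (hbdd.mono hQsub)
      have hpc : IsPreconnected (Q ∪ {a}) :=
        isPreconnected_connectedComponentIn.subset_closure subset_union_left
          (union_subset subset_closure (singleton_subset_iff.mpr hacl))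
      have h3 : Q ∪ {a} ⊆ connectedComponentIn S a :=
        hpc.subset_connectedComponentIn (Or.inr rfl)
          (union_subset hQsub (singleton_subset_iff.mpr (hPsub haP)))
      have h4 : connectedComponentIn S a = P := (connectedComponentIn_eq haP).symm
      have hvP : v ∈ P := h4 ▸ h3 (Or.inl (mem_connectedComponentIn hv))
      exact connectedComponentIn_eq hvP
    by_cases haQ : a ∈ Q
    · have hacl : a ∈ closure P := csInf_mem_closure hPne (hbdd.mono hPsub)
      have hpc : IsPreconnected (P ∪ {a}) :=
        isPreconnected_connectedComponentIn.subset_closure subset_union_left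
          (union_subset subset_closure (singleton_subset_iff.mpr hacl))
      have h3 : P ∪ {a} ⊆ connectedComponentIn S a :=
        hpc.subset_connectedComponentIn (Or.inr rfl)
          (union_subset hPsub (singleton_subset_iff.mpr (hQsub haQ)))
      have h4 : connectedComponentIn S a = Q := (connectedComponentIn_eq haQ).symm
      have huQ : u ∈ Q := h4 ▸ h3 (Or.inl (mem_connectedComponentIn hu))
      exact (connectedComponentIn_eq huQ).symm
    · -- a in neither; find q' ∈ Q with q' < u, then u ∈ Q by ordConnected
      have hau : a < u :=
        lt_of_le_of_ne (csInf_le (hbdd.mono hPsub) (mem_connectedComponentIn hu))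
          (fun h => haP (h ▸ mem_connectedComponentIn hu))
      have h5 : sInf Q < u := by rw [← heq]; exact hau
      obtain ⟨q', hq'Q, hq'u⟩ := exists_lt_of_csInf_lt hQne h5
      have huQ : u ∈ Q :=
        (isPreconnected_connectedComponentIn.ordConnected).out hq'Q
          (mem_connectedComponentIn hv) ⟨hq'u.le, huv⟩
      exact (connectedComponentIn_eq huQ).symm
  have himg : (sInf '' {P | ∃ u ∈ S, P = connectedComponentIn S u}).Finite := by
    refine hfr.subset ?_
    rintro _ ⟨P, ⟨u, hu, rfl⟩, rfl⟩
    exact hinf u hu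
  refine Set.Finite.of_finite_image himg ?_
  rintro P ⟨u, hu, rfl⟩ Q ⟨v, hv, rfl⟩ heq
  rcases le_total u v with h | h
  · exact hkey u hu v hv heq h
  · exact (hkey v hv u hu heq.symm h).symm

end RealLemmas

section Graph
variable {G : Type*} [TopologicalSpace G] [CompactSpace G] [T2Space G]
variable {n : ℕ} {f : Fin n → unitInterval → G}

/-- The arc maps clamped to `ℝ`. -/
noncomputable def gmap (f : Fin n → unitInterval → G) (i : Fin n) (t : ℝ) : G :=
  f i (Set.projIcc 0 1 zero_le_one t)

lemma gmap_cont (hf : ∀ i, Continuous (f i) ∧ Function.Injective (f i)) (i : Fin n) :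
    Continuous (gmap f i) := (hf i).1.comp continuous_projIcc

lemma gmap_coe (i : Fin n) (p : unitInterval) : gmap f i (p : ℝ) = f i p := by
  unfold gmap
  congr 1
  exact Set.projIcc_of_mem _ p.2 ▸ rfl

lemma gmap_eq_iff (hf : ∀ i, Continuous (f i) ∧ Function.Injective (f i)) (i : Fin n)
    {s t : ℝ} (hs : s ∈ Icc (0:ℝ) 1) (ht : t ∈ Icc (0:ℝ) 1) :
    gmap f i s = gmap f i t ↔ s = t := by
  constructor
  · intro h
    have := (hf i).2 h
    have h1 : ((Set.projIcc 0 1 zero_le_one s : unitInterval) : ℝ) = s := by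
      rw [Set.projIcc_of_mem _ hs]
    have h2 : ((Set.projIcc 0 1 zero_le_one t : unitInterval) : ℝ) = t := by
      rw [Set.projIcc_of_mem _ ht]
    rw [← h1, ← h2, this]
  · rintro rfl; rfl

lemma gmap_mem_range (i : Fin n) (t : ℝ) : gmap f i t ∈ range (f i) := ⟨_, rfl⟩

lemma gmap_image_Icc (i : Fin n) : gmap f i '' (Icc 0 1) = range (f i) := by
  apply subset_antisymm
  · rintro _ ⟨t, -, rfl⟩; exact ⟨_, rfl⟩
  · rintro _ ⟨p, rfl⟩
    exact ⟨(p : ℝ), p.2, gmap_coe i p⟩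

lemma gmap_val_eq_iff (hf : ∀ i, Continuous (f i) ∧ Function.Injective (f i)) (i : Fin n)
    {t : ℝ} (ht : t ∈ Icc (0:ℝ) 1) {p : unitInterval} :
    gmap f i t = f i p ↔ t = (p : ℝ) := by
  rw [← gmap_coe (f := f) i p]
  exact gmap_eq_iff hf i ht p.2

/-- interior points of an arc lie on no other arc -/
lemma not_mem_other (hf : ∀ i, Continuous (f i) ∧ Function.Injective (f i))
    (hint : ∀ i j, i ≠ j →
      Set.range (f i) ∩ Set.range (f j) ⊆ ({f i 0, f i 1} : Set G) ∩ {f j 0, f j 1})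
    {i j : Fin n} (hij : j ≠ i) {t : ℝ} (ht : t ∈ Ioo (0:ℝ) 1) :
    gmap f i t ∉ range (f j) := by
  intro hmem
  have h2 := hint i j (Ne.symm hij) ⟨gmap_mem_range i t, hmem⟩
  have ht' : t ∈ Icc (0:ℝ) 1 := ⟨le_of_lt ht.1, le_of_lt ht.2⟩
  have h3 := h2.1
  simp only [mem_insert_iff, mem_singleton_iff] at h3
  rcases h3 with h | h
  · rw [gmap_val_eq_iff hf i ht'] at h
    have h0 : t = (0:ℝ) := h
    exact (lt_irrefl _ (h0 ▸ ht.1)).elim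
  · rw [gmap_val_eq_iff hf i ht'] at h
    have h1 : t = (1:ℝ) := h
    exact (lt_irrefl _ (h1 ▸ ht.2)).elim

lemma gIoo_open (hf : ∀ i, Continuous (f i) ∧ Function.Injective (f i))
    (hcov : (⋃ i, Set.range (f i)) = Set.univ)
    (hint : ∀ i j, i ≠ j →
      Set.range (f i) ∩ Set.range (f j) ⊆ ({f i 0, f i 1} : Set G) ∩ {f j 0, f j 1})
    (i : Fin n) {a b : ℝ} (ha : 0 ≤ a) (hb : b ≤ 1) :
    IsOpen (gmap f i '' Ioo a b) := by
  rcases le_or_gt b a with hab | hab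
  · rw [Ioo_eq_empty (not_lt.mpr hab)]; simp
  have hIoo_sub : Ioo a b ⊆ Ioo (0:ℝ) 1 :=
    fun t htt => ⟨lt_of_le_of_lt ha htt.1, lt_of_lt_of_le htt.2 hb⟩
  have hIoo_sub' : Ioo a b ⊆ Icc (0:ℝ) 1 :=
    fun t htt => ⟨le_of_lt (hIoo_sub htt).1, le_of_lt (hIoo_sub htt).2⟩
  have hcompl : (gmap f i '' Ioo a b)ᶜ =
      (⋃ j ∈ {j : Fin n | j ≠ i}, range (f j)) ∪ gmap f i '' (Icc 0 a ∪ Icc b 1) := by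
    apply subset_antisymm
    · intro z hz
      have hz2 : z ∈ ⋃ j, range (f j) := hcov ▸ mem_univ z
      obtain ⟨_, ⟨j, rfl⟩, hj⟩ := hz2
      rcases em (j = i) with rfl | hji
      · obtain ⟨p, rfl⟩ := hj
        rcases em ((p : ℝ) ∈ Ioo a b) with hin | hin
        · exact absurd ⟨(p : ℝ), hin, gmap_coe j p⟩ hz
        · refine Or.inr ⟨(p : ℝ), ?_, gmap_coe j p⟩
          rcases le_or_gt (p : ℝ) a with h | h
          · exact Or.inl ⟨p.2.1, h⟩
          · exact Or.inr ⟨le_of_not_gt fun hc => hin ⟨h, hc⟩, p.2.2⟩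
      · exact Or.inl (mem_biUnion hji hj)
    · rintro z (hz | hz)
      · simp only [mem_iUnion, exists_prop, mem_setOf_eq] at hz
        obtain ⟨j, hji, hj⟩ := hz
        rintro ⟨t, htab, rfl⟩
        exact not_mem_other hf hint hji (hIoo_sub htab) hj
      · obtain ⟨s, hs, rfl⟩ := hz
        rintro ⟨t, htab, ht⟩
        have hs' : s ∈ Icc (0:ℝ) 1 := by
          rcases hs with h | h
          · exact ⟨h.1, h.2.trans (le_trans hab.le hb)⟩
          · exact ⟨le_trans (le_trans ha hab.le) h.1, h.2⟩
        rw [gmap_eq_iff hf i (hIoo_sub' htab) hs'] at ht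
        rcases hs with h | h
        · exact absurd htab.1 (not_lt.mpr (ht ▸ h.2))
        · exact absurd htab.2 (not_lt.mpr (ht ▸ h.1))
    
  rw [← isClosed_compl_iff, hcompl]
  apply IsClosed.union
  · exact (Set.toFinite _).isClosed_biUnion fun j _ => (isCompact_range (hf j).1).isClosed
  · exact (((isCompact_Icc.union isCompact_Icc).image (gmap_cont hf i))).isClosed

lemma isOpen_of_preimages (hf : ∀ i, Continuous (f i) ∧ Function.Injective (f i))
    (hcov : (⋃ i, Set.range (f i)) = Set.univ) {S : Set G}
    (h : ∀ i, IsOpen (gmap f i ⁻¹' S)) : IsOpen S := by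
  rw [← isClosed_compl_iff]
  have : Sᶜ = ⋃ i, gmap f i '' (Icc 0 1 ∩ gmap f i ⁻¹' Sᶜ) := by
    apply subset_antisymm
    · intro z hz
      have hz2 : z ∈ ⋃ j, range (f j) := hcov ▸ mem_univ z
      obtain ⟨_, ⟨j, rfl⟩, p, rfl⟩ := hz2
      exact mem_iUnion.mpr ⟨j, ⟨(p:ℝ), ⟨p.2, by rw [mem_preimage, gmap_coe]; exact hz⟩,
        gmap_coe j p⟩⟩
    · rintro z hz
      obtain ⟨i, t, ⟨-, ht2⟩, rfl⟩ := mem_iUnion.mp hz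
      exact ht2
  rw [this]
  apply isClosed_iUnion_of_finite
  intro i
  refine ((IsCompact.of_isClosed_subset isCompact_Icc
    (isClosed_Icc.inter (by rw [preimage_compl]; exact (h i).isClosed_compl))
      inter_subset_left).image
      (gmap_cont hf i)).isClosed
    
lemma graph_locallyConnected (hf : ∀ i, Continuous (f i) ∧ Function.Injective (f i))
    (hcov : (⋃ i, Set.range (f i)) = Set.univ) : LocallyConnectedSpace G := by
  rw [locallyConnectedSpace_iff_connectedComponentIn_open]
  intro F hF x hx
  apply isOpen_of_preimages hf hcov
  intro i
  have heq : gmap f i ⁻¹' (connectedComponentIn F x) =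
      ⋃ t ∈ gmap f i ⁻¹' (connectedComponentIn F x),
        connectedComponentIn (gmap f i ⁻¹' F) t := by
    apply subset_antisymm
    · intro t ht
      exact mem_biUnion ht (mem_connectedComponentIn
        (show gmap f i t ∈ F from connectedComponentIn_subset _ _ ht))
    · rintro t ht
      simp only [mem_iUnion, exists_prop] at ht
      obtain ⟨s, hs, hts⟩ := ht
      have himg : gmap f i '' connectedComponentIn (gmap f i ⁻¹' F) s ⊆
          connectedComponentIn F (gmap f i s) := by
        apply (isPreconnected_connectedComponentIn.image _
          (gmap_cont hf i).continuousOn).subset_connectedComponentIn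
        · exact ⟨s, mem_connectedComponentIn
            (show gmap f i s ∈ F from connectedComponentIn_subset _ _ hs), rfl⟩
        · rintro _ ⟨u, hu, rfl⟩
          exact (connectedComponentIn_subset (gmap f i ⁻¹' F) s hu : _)
      have h2 : connectedComponentIn F (gmap f i s) = connectedComponentIn F x :=
        (connectedComponentIn_eq (show gmap f i s ∈ connectedComponentIn F x from hs)).symm
      rw [mem_preimage]
      rw [← h2]
      exact himg ⟨t, hts, rfl⟩
  rw [heq]
  exact isOpen_biUnion fun t _ => (hF.preimage (gmap_cont hf i)).connectedComponentIn

lemma W_comps (hf : ∀ i, Continuous (f i) ∧ Function.Injective (f i))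
    (hcov : (⋃ i, Set.range (f i)) = Set.univ)
    (hint : ∀ i j, i ≠ j →
      Set.range (f i) ∩ Set.range (f j) ⊆ ({f i 0, f i 1} : Set G) ∩ {f j 0, f j 1})
    {K : Set G} (hK : IsClosed K) (hKpc : IsPreconnected K) (i : Fin n) :
    {P | ∃ t ∈ Icc (0:ℝ) 1 ∩ gmap f i ⁻¹' K,
        P = connectedComponentIn (Icc (0:ℝ) 1 ∩ gmap f i ⁻¹' K) t} ⊆
      {Icc (0:ℝ) 1 ∩ gmap f i ⁻¹' K,
       connectedComponentIn (Icc (0:ℝ) 1 ∩ gmap f i ⁻¹' K) 0,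
       connectedComponentIn (Icc (0:ℝ) 1 ∩ gmap f i ⁻¹' K) 1} := by
  set W := Icc (0:ℝ) 1 ∩ gmap f i ⁻¹' K with hW
  rintro P ⟨x, hxW, rfl⟩
  simp only [mem_insert_iff, mem_singleton_iff]
  by_cases h0 : (0:ℝ) ∈ connectedComponentIn W x
  · exact Or.inr (Or.inl (connectedComponentIn_eq h0))
  by_cases h1 : (1:ℝ) ∈ connectedComponentIn W x
  · exact Or.inr (Or.inr (connectedComponentIn_eq h1))
  refine Or.inl ?_
  have hWclosed : IsClosed W := isClosed_Icc.inter (hK.preimage (gmap_cont hf i))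
  have hWIcc : W ⊆ Icc 0 1 := inter_subset_left
  set P := connectedComponentIn W x with hPdef
  have hPclosed : IsClosed P := isClosed_cci hWclosed x
  have hPsub : P ⊆ W := connectedComponentIn_subset _ _
  have hPcomp : IsCompact P :=
    IsCompact.of_isClosed_subset isCompact_Icc hPclosed (hPsub.trans hWIcc)
  have hPne : P.Nonempty := ⟨x, mem_connectedComponentIn hxW⟩
  set s := sInf P with hsdef
  set t := sSup P with htdef
  have hsP : s ∈ P := hPcomp.sInf_mem hPne
  have htP : t ∈ P := hPcomp.sSup_mem hPne
  have hs0 : 0 < s := lt_of_le_of_ne (hWIcc (hPsub hsP)).1 (fun h => h0 (h ▸ hsP))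
  have ht1 : t < 1 := lt_of_le_of_ne (hWIcc (hPsub htP)).2 (fun h => h1 (h ▸ htP))
  have hgap1 : ∃ g, g ∈ Ioo (0:ℝ) s ∧ g ∉ W := by
    by_contra hno
    push_neg at hno
    have hsub : Ioc (0:ℝ) s ⊆ W := by
      intro u hu
      rcases eq_or_lt_of_le hu.2 with rfl | hlt
      · exact hPsub hsP
      · exact hno u ⟨hu.1, hlt⟩
    have h2 : Ioc (0:ℝ) s ⊆ P := by
      have h3 := isPreconnected_Ioc.subset_connectedComponentIn
        (⟨hs0, le_refl s⟩ : s ∈ Ioc 0 s) hsub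
      rwa [← connectedComponentIn_eq (hsP : s ∈ connectedComponentIn W x)] at h3
    have : s ≤ s/2 := csInf_le hPcomp.bddBelow (h2 ⟨half_pos hs0, half_le_self hs0.le⟩)
    linarith
  have hgap2 : ∃ g, g ∈ Ioo t 1 ∧ g ∉ W := by
    by_contra hno
    push_neg at hno
    have hsub : Ico t 1 ⊆ W := by
      intro u hu
      rcases eq_or_lt_of_le hu.1 with rfl | hlt
      · exact hPsub htP
      · exact hno u ⟨hlt, hu.2⟩
    have h2 : Ico t 1 ⊆ P := by
      have h3 := isPreconnected_Ico.subset_connectedComponentIn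
        (⟨le_refl t, ht1⟩ : t ∈ Ico t 1) hsub
      rwa [← connectedComponentIn_eq (htP : t ∈ connectedComponentIn W x)] at h3
    have : (t+1)/2 ≤ t := le_csSup hPcomp.bddAbove (h2 ⟨by linarith, by linarith⟩)
    linarith
  obtain ⟨g1, hg1I, hg1W⟩ := hgap1
  obtain ⟨g2, hg2I, hg2W⟩ := hgap2
  have hst : s ≤ t := csInf_le_csSup hPne hPcomp.bddBelow hPcomp.bddAbove
  set V := gmap f i '' Ioo g1 g2 with hVdef
  have hVopen : IsOpen V := gIoo_open hf hcov hint i hg1I.1.le hg2I.2.le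
  have hVIcc : V ⊆ gmap f i '' Icc g1 g2 := image_mono Ioo_subset_Icc_self
  have hKsub : K ⊆ V ∪ (gmap f i '' Icc g1 g2)ᶜ := by
    intro w hw
    by_cases h : w ∈ gmap f i '' Icc g1 g2
    · obtain ⟨u, huI, rfl⟩ := h
      have huW : u ∈ W := ⟨⟨hg1I.1.le.trans huI.1, huI.2.trans hg2I.2.le⟩, hw⟩
      refine Or.inl ⟨u, ⟨lt_of_le_of_ne huI.1 fun h => hg1W (h ▸ huW), 
        lt_of_le_of_ne huI.2 fun h => hg2W (h ▸ huW)⟩, rfl⟩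
    · exact Or.inr h
  have hKV : (K ∩ V).Nonempty :=
    ⟨gmap f i s, (hPsub hsP).2, ⟨s, ⟨hg1I.2, lt_of_le_of_lt hst hg2I.1⟩, rfl⟩⟩
  have hKsubV : K ⊆ V := by
    by_contra hn
    obtain ⟨z, hzK, hzV⟩ := not_subset.mp hn
    obtain ⟨w, -, hw1, hw2⟩ := hKpc V _ hVopen
      ((isCompact_Icc.image (gmap_cont hf i)).isClosed).isOpen_compl hKsub hKV
      ⟨z, hzK, (hKsub hzK).resolve_left hzV⟩
    exact hw2 (hVIcc hw1)
  have hKrange : K ⊆ range (f i) :=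
    hKsubV.trans (by rintro _ ⟨u, -, rfl⟩; exact gmap_mem_range i u)
  have hemb : Topology.IsClosedEmbedding (f i) := (hf i).1.isClosedEmbedding (hf i).2
  have hpre : IsPreconnected (f i ⁻¹' K) := by
    have h3 := hemb.isInducing.isPreconnected_image (s := f i ⁻¹' K)
    rw [image_preimage_eq_inter_range, inter_eq_self_of_subset_left hKrange] at h3
    exact h3.mp hKpc
  have hWeq : W = Subtype.val '' (f i ⁻¹' K) := by
    apply subset_antisymm
    · intro u hu
      refine ⟨Set.projIcc 0 1 zero_le_one u, hu.2, ?_⟩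
      rw [Set.projIcc_of_mem _ hu.1]
    · rintro _ ⟨p, hp, rfl⟩
      exact ⟨p.2, by rw [mem_preimage, gmap_coe]; exact hp⟩
  have hWpc : IsPreconnected W := by
    rw [hWeq]
    exact hpre.image _ continuous_subtype_val.continuousOn
  exact subset_antisymm (connectedComponentIn_subset _ _)
    (hWpc.subset_connectedComponentIn hxW subset_rfl)

lemma T_comps_finite (hf : ∀ i, Continuous (f i) ∧ Function.Injective (f i))
    (hcov : (⋃ i, Set.range (f i)) = Set.univ)
    (hint : ∀ i j, i ≠ j →
      Set.range (f i) ∩ Set.range (f j) ⊆ ({f i 0, f i 1} : Set G) ∩ {f j 0, f j 1})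
    {A : Set G} (hA : IsClosed A)
    (hAcomps : {K : Set G | ∃ x ∈ A, K = connectedComponentIn A x}.Finite) (i : Fin n) :
    {P : Set ℝ | ∃ u ∈ Icc (0:ℝ) 1 ∩ gmap f i ⁻¹' A,
        P = connectedComponentIn (Icc (0:ℝ) 1 ∩ gmap f i ⁻¹' A) u}.Finite := by
  apply comps_finite_of_cover
    (P := ⋃ K ∈ {K : Set G | ∃ x ∈ A, K = connectedComponentIn A x},
      {P : Set ℝ | ∃ u ∈ Icc (0:ℝ) 1 ∩ gmap f i ⁻¹' K,
        P = connectedComponentIn (Icc (0:ℝ) 1 ∩ gmap f i ⁻¹' K) u})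
  · apply hAcomps.biUnion
    rintro K hK
    obtain ⟨x, hx, rfl⟩ := hK
    exact Set.Finite.subset ((finite_singleton _).insert _ |>.insert _)
      (W_comps hf hcov hint (isClosed_cci hA x) isPreconnected_connectedComponentIn i)
  · intro u hu
    refine mem_sUnion.mpr
      ⟨connectedComponentIn
        (Icc (0:ℝ) 1 ∩ gmap f i ⁻¹' (connectedComponentIn A (gmap f i u))) u, ?_, ?_⟩
    · exact mem_biUnion ⟨gmap f i u, hu.2, rfl⟩
        ⟨u, ⟨hu.1, mem_connectedComponentIn hu.2⟩, rfl⟩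
    · exact mem_connectedComponentIn ⟨hu.1, mem_connectedComponentIn hu.2⟩
  · rintro p hp
    simp only [mem_iUnion, exists_prop, mem_setOf_eq] at hp
    obtain ⟨K, hK, u, huW, rfl⟩ := hp
    have hKA : K ⊆ A := by obtain ⟨x, hx, rfl⟩ := hK; exact connectedComponentIn_subset _ _
    refine ⟨(connectedComponentIn_subset _ _).trans
      (inter_subset_inter_right _ (preimage_mono hKA)), isPreconnected_connectedComponentIn⟩

lemma frontier_A_finite (hf : ∀ i, Continuous (f i) ∧ Function.Injective (f i))
    (hcov : (⋃ i, Set.range (f i)) = Set.univ)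
    (hint : ∀ i j, i ≠ j →
      Set.range (f i) ∩ Set.range (f j) ⊆ ({f i 0, f i 1} : Set G) ∩ {f j 0, f j 1})
    {A : Set G} (hA : IsClosed A)
    (hAcomps : {K : Set G | ∃ x ∈ A, K = connectedComponentIn A x}.Finite) :
    (frontier A).Finite := by
  have hTfin : ∀ i : Fin n, (frontier (Icc (0:ℝ) 1 ∩ gmap f i ⁻¹' A)).Finite := fun i =>
    frontier_finite_of_comps (isClosed_Icc.inter (hA.preimage (gmap_cont hf i)))
      inter_subset_left (T_comps_finite hf hcov hint hA hAcomps i)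
  have hsub : frontier A ⊆ ⋃ i,
      gmap f i '' (frontier (Icc (0:ℝ) 1 ∩ gmap f i ⁻¹' A) ∪ {0, 1}) := by
    intro x hx
    have hx2 : x ∈ ⋃ j, range (f j) := hcov ▸ mem_univ x
    obtain ⟨_, ⟨i, rfl⟩, p, rfl⟩ := hx2
    set u := (p : ℝ) with hu
    refine mem_iUnion.mpr ⟨i, ?_⟩
    by_cases hu0 : u = 0 ∨ u = 1
    · refine ⟨u, Or.inr ?_, gmap_coe i p⟩
      rcases hu0 with h | h
      · exact Or.inl h
      · exact Or.inr (mem_singleton_iff.mpr h)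
    push_neg at hu0
    have huI : u ∈ Ioo (0:ℝ) 1 :=
      ⟨lt_of_le_of_ne p.2.1 (Ne.symm hu0.1), lt_of_lt_of_le (lt_of_le_of_ne p.2.2 hu0.2) le_rfl⟩
    refine ⟨u, Or.inl ?_, gmap_coe i p⟩
    set T := Icc (0:ℝ) 1 ∩ gmap f i ⁻¹' A with hT
    have hxA : f i p ∈ A := hA.frontier_subset hx
    have huT : u ∈ T := ⟨p.2, by rw [mem_preimage, gmap_coe]; exact hxA⟩
    refine ⟨subset_closure huT, fun hint2 => ?_⟩
    -- u interior to T would make x interior to A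
    obtain ⟨ε, hε, hball⟩ := Metric.mem_nhds_iff.mp (mem_interior_iff_mem_nhds.mp hint2)
    set ε' := min ε (min u (1 - u)) with hε'
    have hε'0 : 0 < ε' := lt_min hε (lt_min huI.1 (by linarith [huI.2]))
    have hIooT : Ioo (u - ε') (u + ε') ⊆ T := by
      intro w hw
      apply hball
      rw [Real.ball_eq_Ioo]
      have h1 : ε' ≤ ε := min_le_left _ _
      exact ⟨by cases hw; linarith, by cases hw; linarith⟩
    have hIoo01 : 0 ≤ u - ε' := by
      have : ε' ≤ u := (min_le_right _ _).trans (min_le_left _ _)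
      linarith
    have hIoo01' : u + ε' ≤ 1 := by
      have : ε' ≤ 1 - u := (min_le_right _ _).trans (min_le_right _ _)
      linarith
    have hNopen : IsOpen (gmap f i '' Ioo (u - ε') (u + ε')) :=
      gIoo_open hf hcov hint i hIoo01 hIoo01'
    have hNA : gmap f i '' Ioo (u - ε') (u + ε') ⊆ A := by
      rintro _ ⟨w, hw, rfl⟩
      exact (hIooT hw).2
    have hxint : f i p ∈ interior A := mem_interior.mpr
      ⟨_, hNA, hNopen, ⟨u, ⟨by linarith, by linarith⟩, gmap_coe i p⟩⟩
    exact hx.2 hxint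
  exact (Set.finite_iUnion fun i =>
    ((hTfin i).union ((finite_singleton _).insert _)).image _).subset hsub

lemma cSet_finite (hf : ∀ i, Continuous (f i) ∧ Function.Injective (f i))
    (hcov : (⋃ i, Set.range (f i)) = Set.univ)
    (hint : ∀ i j, i ≠ j →
      Set.range (f i) ∩ Set.range (f j) ⊆ ({f i 0, f i 1} : Set G) ∩ {f j 0, f j 1})
    {A : Set G} (hA : IsClosed A)
    (hAcomps : {K : Set G | ∃ x ∈ A, K = connectedComponentIn A x}.Finite) :
    (cSet A).Finite := by
  have hOfin : ∀ i : Fin n,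
      {Q : Set ℝ | ∃ u ∈ Icc (0:ℝ) 1 ∩ (Icc (0:ℝ) 1 ∩ gmap f i ⁻¹' A)ᶜ,
        Q = connectedComponentIn (Icc (0:ℝ) 1 ∩ (Icc (0:ℝ) 1 ∩ gmap f i ⁻¹' A)ᶜ) u}.Finite := by
    intro i
    apply comps_finite_of_frontier inter_subset_left
    have h1 : (frontier (Icc (0:ℝ) 1 ∩ gmap f i ⁻¹' A)).Finite :=
      frontier_finite_of_comps (isClosed_Icc.inter (hA.preimage (gmap_cont hf i)))
        inter_subset_left (T_comps_finite hf hcov hint hA hAcomps i)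
    refine Set.Finite.subset (((finite_singleton (1:ℝ)).insert 0).union h1) ?_
    refine (frontier_inter_subset _ _).trans ?_
    rintro w (hw | hw)
    · exact Or.inl (by rw [frontier_Icc zero_le_one] at hw; exact hw.1)
    · exact Or.inr (by rw [frontier_compl] at hw; exact hw.2)
  have hcs : cSet A = {C | ∃ x ∈ Aᶜ, C = connectedComponentIn Aᶜ x} := rfl
  rw [hcs]
  apply comps_finite_of_cover
    (P := ⋃ i : Fin n, (fun Q => gmap f i '' Q) ''
      {Q : Set ℝ | ∃ u ∈ Icc (0:ℝ) 1 ∩ (Icc (0:ℝ) 1 ∩ gmap f i ⁻¹' A)ᶜ,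
        Q = connectedComponentIn (Icc (0:ℝ) 1 ∩ (Icc (0:ℝ) 1 ∩ gmap f i ⁻¹' A)ᶜ) u})
  · exact Set.finite_iUnion fun i => (hOfin i).image _
  · intro x hx
    have hx2 : x ∈ ⋃ j, range (f j) := hcov ▸ mem_univ x
    obtain ⟨_, ⟨i, rfl⟩, p, rfl⟩ := hx2
    set u := (p : ℝ) with hu
    have huO : u ∈ Icc (0:ℝ) 1 ∩ (Icc (0:ℝ) 1 ∩ gmap f i ⁻¹' A)ᶜ := by
      refine ⟨p.2, fun hc => ?_⟩
      rw [mem_inter_iff, mem_preimage, gmap_coe] at hc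
      exact hx hc.2
    refine mem_sUnion.mpr ⟨gmap f i '' connectedComponentIn _ u,
      mem_iUnion.mpr ⟨i, ⟨_, ⟨u, huO, rfl⟩, rfl⟩⟩, ⟨u, mem_connectedComponentIn huO, gmap_coe i p⟩⟩
  · rintro piece hp
    simp only [mem_iUnion, mem_image, mem_setOf_eq] at hp
    obtain ⟨i, Q, ⟨u, huO, rfl⟩, rfl⟩ := hp
    constructor
    · rintro _ ⟨w, hw, rfl⟩
      have hwO := connectedComponentIn_subset _ _ hw
      exact fun hc => hwO.2 ⟨hwO.1, hc⟩
    · exact isPreconnected_connectedComponentIn.image _ (gmap_cont hf i).continuousOn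

end Graph

section Complement
variable {X : Type*} [TopologicalSpace X]

lemma closure_cci_compl (hlc : LocallyConnectedSpace X) {A : Set X} (hA : IsClosed A)
    {C : Set X} (hC : C ∈ cSet A) :
    IsOpen C ∧ frontier C ⊆ frontier A ∧ closure C = C ∪ frontier C := by
  haveI := hlc
  obtain ⟨x, hx, rfl⟩ := hC
  set C := connectedComponentIn Aᶜ x with hCdef
  have hopen : IsOpen C := hA.isOpen_compl.connectedComponentIn
  have hfr : frontier C ⊆ frontier A := by
    intro y hy
    rw [hopen.frontier_eq] at hy
    have hyA : y ∈ A := by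
      by_contra hyA
      have hpre : IsPreconnected (C ∪ {y}) :=
        isPreconnected_connectedComponentIn.subset_closure subset_union_left
          (union_subset subset_closure (singleton_subset_iff.mpr hy.1))
      have : C ∪ {y} ⊆ C :=
        hpre.subset_connectedComponentIn (Or.inl (mem_connectedComponentIn hx))
          (union_subset (connectedComponentIn_subset _ _) (singleton_subset_iff.mpr hyA))
      exact hy.2 (this (Or.inr rfl))
    constructor
    · rw [hA.closure_eq]; exact hyA
    · intro hyint
      obtain ⟨z, hz⟩ := mem_closure_iff.mp hy.1 _ isOpen_interior hyint
      exact connectedComponentIn_subset _ _ hz.2 (interior_subset hz.1)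
  refine ⟨hopen, hfr, ?_⟩
  rw [hopen.frontier_eq]
  ext z
  constructor
  · intro hz
    rcases em (z ∈ C) with h | h
    · exact Or.inl h
    · exact Or.inr ⟨hz, h⟩
  · rintro (h | h)
    · exact subset_closure h
    · exact h.1

lemma frontier_cci_nonempty [PreconnectedSpace X] {A : Set X} (hA : IsClosed A)
    (hAne : A.Nonempty) {C : Set X} (hC : C ∈ cSet A) (hCopen : IsOpen C)
    (hCfr : frontier C ⊆ frontier A) : (frontier C).Nonempty := by
  rw [nonempty_iff_ne_empty]
  intro hfr
  have hclopen : IsClopen C := isClopen_iff_frontier_eq_empty.mpr hfr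
  obtain ⟨x, hx, rfl⟩ := hC
  rcases isClopen_iff.mp hclopen with h | h
  · exact hx (by simpa [h] using mem_connectedComponentIn (show x ∈ Aᶜ from hx))
  · obtain ⟨a, ha⟩ := hAne
    exact connectedComponentIn_subset Aᶜ x (h ▸ mem_univ a) ha

/-- A component of `Aᶜ` whose frontier lies in a closed `B ⊆ A` is a full component
of `Bᶜ`. -/
lemma cci_compl_eq {A B : Set X} (hA : IsClosed A) (hBA : B ⊆ A) (hB : IsClosed B)
    {C : Set X} (hC : C ∈ cSet A) (hCopen : IsOpen C) (hfrB : frontier C ⊆ B)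
    {y : X} (hy : y ∈ C) : connectedComponentIn Bᶜ y = C := by
  obtain ⟨x, hx, rfl⟩ := hC
  set C := connectedComponentIn Aᶜ x with hCdef
  have hCsub : C ⊆ Aᶜ := connectedComponentIn_subset _ _
  have hCB : C ⊆ Bᶜ := fun z hz hzB => hCsub hz (hBA hzB)
  have h1 : C ⊆ connectedComponentIn Bᶜ y :=
    isPreconnected_connectedComponentIn.subset_connectedComponentIn hy hCB
  refine subset_antisymm ?_ h1
  set D := connectedComponentIn Bᶜ y with hDdef
  have hyB : y ∈ Bᶜ := hCB hy
  by_contra hnot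
  obtain ⟨z, hzD, hzC⟩ := not_subset.mp hnot
  have hcov : D ⊆ C ∪ (closure C)ᶜ := by
    intro w hw
    rcases em (w ∈ C) with h | h
    · exact Or.inl h
    · refine Or.inr fun hwcl => ?_
      have hwfr : w ∈ frontier C := by
        rw [hCopen.frontier_eq]; exact ⟨hwcl, h⟩
      exact connectedComponentIn_subset Bᶜ y hw (hfrB hwfr)
  have hz2 : z ∈ (closure C)ᶜ := (hcov hzD).resolve_left hzC
  obtain ⟨w, -, hw1, hw2⟩ := isPreconnected_connectedComponentIn C (closure C)ᶜ hCopen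
    isClosed_closure.isOpen_compl hcov ⟨y, mem_connectedComponentIn hyB, hy⟩ ⟨z, hzD, hz2⟩
  exact hw2 (subset_closure hw1)

end Complement

section SideOf
variable {X : Type*} [TopologicalSpace X] [T1Space X] [CompactSpace X] [T2Space X]
  [ConnectedSpace X]

lemma sideOf_eq (hlc : LocallyConnectedSpace X) {A B1 B2 : Set X}
    (hA : IsRegularSet A) (hAne : A.Nonempty) (hfin : (frontier A).Finite)
    (hunion : B1 ∪ B2 = frontier A) (hdisj : B1 ∩ B2 = ∅)
    (h1 : ConsistentComplement A B1) :
    sideOf B1 A = A ∪ closure (⋃₀ {C | C ∈ cSet A ∧ frontier C ∩ B1 = ∅}) := by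
  have hclA : IsClosed A := hA.1
  have hB1fr : B1 ⊆ frontier A := hunion ▸ subset_union_left
  have hB1A : B1 ⊆ A := fun b hb => hclA.frontier_subset (hB1fr hb)
  have hB1fin : B1.Finite := hfin.subset hB1fr
  have hU : (⋃ x ∈ {x : X | x ∉ B1 ∧ (connectedComponentIn B1ᶜ x ∩ A).Nonempty},
      connectedComponentIn B1ᶜ x) =
      (A \ B1) ∪ ⋃₀ {C | C ∈ cSet A ∧ frontier C ∩ B1 = ∅} := by
    apply subset_antisymm
    · rintro y hy
      simp only [mem_iUnion, exists_prop, mem_setOf_eq] at hy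
      obtain ⟨x, ⟨hxB1, hxA⟩, hyD⟩ := hy
      have hyB1 : y ∈ B1ᶜ := connectedComponentIn_subset _ _ hyD
      rcases em (y ∈ A) with hyA | hyA
      · exact Or.inl ⟨hyA, hyB1⟩
      · have hCmem : connectedComponentIn Aᶜ y ∈ cSet A := ⟨y, hyA, rfl⟩
        have hCopen := (closure_cci_compl hlc hclA hCmem).1
        rcases h1 y hyA with hfr | hfr
        · exfalso
          have hEq : connectedComponentIn B1ᶜ y = connectedComponentIn Aᶜ y :=
            cci_compl_eq hclA hB1A hB1fin.isClosed hCmem hCopen hfr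
              (mem_connectedComponentIn hyA)
          have hDy : connectedComponentIn B1ᶜ y = connectedComponentIn B1ᶜ x :=
            (connectedComponentIn_eq hyD).symm
          obtain ⟨a, haD, haA⟩ := hxA
          have : a ∈ connectedComponentIn Aᶜ y := by rw [← hEq, hDy]; exact haD
          exact connectedComponentIn_subset _ _ this haA
        · exact Or.inr ⟨_, ⟨hCmem, hfr⟩, mem_connectedComponentIn hyA⟩
    · rintro y (⟨hyA, hyB⟩ | ⟨C, ⟨hCmem, hfrC⟩, hyC⟩)
      · simp only [mem_iUnion, exists_prop, mem_setOf_eq]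
        exact ⟨y, ⟨hyB, ⟨y, mem_connectedComponentIn hyB, hyA⟩⟩,
          mem_connectedComponentIn hyB⟩
      · obtain ⟨hCopen, hCfr, hCcl⟩ := closure_cci_compl hlc hclA hCmem
        obtain ⟨x, hx, rfl⟩ := hCmem
        have hCsub : connectedComponentIn Aᶜ x ⊆ Aᶜ := connectedComponentIn_subset _ _
        have hyB1 : y ∈ B1ᶜ := fun hc => hCsub hyC (hB1A hc)
        have hclB1 : closure (connectedComponentIn Aᶜ x) ⊆ B1ᶜ := by
          rw [hCcl]
          rintro z (hz | hz)
          · exact fun hc => hCsub hz (hB1A hc)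
          · exact fun hc => (eq_empty_iff_forall_notMem.mp hfrC z) ⟨hz, hc⟩
        have hsub2 : closure (connectedComponentIn Aᶜ x) ⊆ connectedComponentIn B1ᶜ y :=
          isPreconnected_connectedComponentIn.closure.subset_connectedComponentIn
            (subset_closure hyC) hclB1
        have hfrne : (frontier (connectedComponentIn Aᶜ x)).Nonempty :=
          frontier_cci_nonempty hclA hAne ⟨x, hx, rfl⟩ hCopen hCfr
        obtain ⟨z, hz⟩ := hfrne
        simp only [mem_iUnion, exists_prop, mem_setOf_eq]
        refine ⟨y, ⟨hyB1, ⟨z, hsub2 (by rw [hCcl]; exact Or.inr hz),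
          hclA.frontier_subset (hCfr hz)⟩⟩, mem_connectedComponentIn hyB1⟩
  rw [sideOf, hU, closure_union,
    closure_diff_finite hclA hA.2.2 hB1fin]
end SideOf

section Core
variable {X : Type*} [TopologicalSpace X] [T1Space X] [CompactSpace X] [T2Space X]
  [ConnectedSpace X]

lemma side_regular (hlc : LocallyConnectedSpace X) {A : Set X}
    (hA : IsRegularSet A) (hAne : A.Nonempty) {S : Set (Set X)} (hS : S ⊆ cSet A)
    (hSfin : S.Finite) : IsRegularSet (A ∪ closure (⋃₀ S)) := by
  have hclA : IsClosed A := hA.1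
  have huniv : (univ : Set X).Nontrivial := by
    obtain ⟨a, ha⟩ := hAne
    obtain ⟨p, -, q, -, hpq⟩ := hA.2.2 a ha
    exact ⟨p, mem_univ p, q, mem_univ q, hpq⟩
  set σ := A ∪ closure (⋃₀ S) with hσ
  have hclS : closure (⋃₀ S) = ⋃ C ∈ S, closure C := hSfin.closure_sUnion
  have hCprop : ∀ C ∈ S, IsOpen C ∧ C.Nonempty ∧ IsPreconnected (closure C) := by
    intro C hC
    have h := closure_cci_compl hlc hclA (hS hC)
    obtain ⟨x, hx, hCeq⟩ := hS hC
    exact ⟨h.1, ⟨x, hCeq ▸ mem_connectedComponentIn hx⟩,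
      (hCeq ▸ isPreconnected_connectedComponentIn).closure⟩
  have hclsub : ∀ C ∈ S, closure C ⊆ σ := fun C hC =>
    (closure_mono (subset_sUnion_of_mem hC)).trans subset_union_right
  refine ⟨hclA.union isClosed_closure, ?_, ?_⟩
  · apply comps_finite_of_cover
      (P := {C | ∃ x ∈ A, C = connectedComponentIn A x} ∪ (closure '' S))
      (hA.2.1.union (hSfin.image _))
    · intro y hy
      rcases hy with hy | hy
      · exact ⟨connectedComponentIn A y, Or.inl ⟨y, hy, rfl⟩, mem_connectedComponentIn hy⟩
      · rw [hclS] at hy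
        obtain ⟨C, hC, hyC⟩ := by simpa using hy
        exact ⟨closure C, Or.inr ⟨C, hC, rfl⟩, hyC⟩
    · rintro p (⟨x, hx, rfl⟩ | ⟨C, hC, rfl⟩)
      · exact ⟨(connectedComponentIn_subset _ _).trans subset_union_left,
          isPreconnected_connectedComponentIn⟩
      · exact ⟨hclsub C hC, (hCprop C hC).2.2⟩
  · intro x hx
    rcases hx with hx | hx
    · refine (hA.2.2 x hx).mono
        (isPreconnected_connectedComponentIn.subset_connectedComponentIn
          (mem_connectedComponentIn hx)
          ((connectedComponentIn_subset _ _).trans subset_union_left))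
    · rw [hclS] at hx
      obtain ⟨C, hC, hxC⟩ := by simpa using hx
      have h1 : closure C ⊆ connectedComponentIn σ x :=
        (hCprop C hC).2.2.subset_connectedComponentIn hxC (hclsub C hC)
      exact (nontrivial_of_isOpen huniv (hCprop C hC).1 (hCprop C hC).2.1).mono
        ((subset_closure.trans h1))

lemma stmt7_core (hlc : LocallyConnectedSpace X) {A B1 B2 : Set X}
    (hA : IsRegularSet A) (hAne : A.Nonempty) (hfin : (frontier A).Finite)
    (hcomp : (cSet A).Finite)
    (hunion : B1 ∪ B2 = frontier A) (hdisj : B1 ∩ B2 = ∅)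
    (h1 : ConsistentComplement A B1) (h2 : ConsistentComplement A B2) :
    (IsRegularSet (sideOf B1 A) ∧ (sideOf B1 A).Nonempty ∧
      IsRegularSet A ∧ A.Nonempty ∧
      IsRegularSet (sideOf B2 A) ∧ (sideOf B2 A).Nonempty) ∧
    sideOf B1 A ∪ sideOf B2 A = Set.univ ∧
    A = sideOf B1 A ∩ sideOf B2 A ∧
    closure (sideOf B1 A \ A) ∩ closure (sideOf B2 A \ A) = ∅ := by
  have hclA : IsClosed A := hA.1
  set S2 := {C | C ∈ cSet A ∧ frontier C ∩ B1 = ∅} with hS2def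
  set S1 := {C | C ∈ cSet A ∧ frontier C ∩ B2 = ∅} with hS1def
  have hS2sub : S2 ⊆ cSet A := fun C hC => hC.1
  have hS1sub : S1 ⊆ cSet A := fun C hC => hC.1
  have hS2fin : S2.Finite := hcomp.subset hS2sub
  have hS1fin : S1.Finite := hcomp.subset hS1sub
  have hunion' : B2 ∪ B1 = frontier A := by rw [union_comm]; exact hunion
  have hdisj' : B2 ∩ B1 = ∅ := by rw [inter_comm]; exact hdisj
  have hσ1 : sideOf B1 A = A ∪ closure (⋃₀ S2) :=
    sideOf_eq hlc hA hAne hfin hunion hdisj h1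
  have hσ3 : sideOf B2 A = A ∪ closure (⋃₀ S1) :=
    sideOf_eq hlc hA hAne hfin hunion' hdisj' h2
  have hfrprop : ∀ C ∈ cSet A, frontier C ⊆ frontier A ∧ (frontier C).Nonempty ∧
      closure C = C ∪ frontier C ∧ C ⊆ Aᶜ := by
    intro C hC
    obtain ⟨hop, hfr, hcl⟩ := closure_cci_compl hlc hclA hC
    refine ⟨hfr, frontier_cci_nonempty hclA hAne hC hop hfr, hcl, ?_⟩
    obtain ⟨x, hx, rfl⟩ := hC
    exact connectedComponentIn_subset _ _
  -- key disjointness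
  have hkey : ∀ C ∈ S2, ∀ C' ∈ S1, closure C ∩ closure C' = ∅ := by
    rintro C ⟨hC, hCB1⟩ C' ⟨hC', hCB2⟩
    obtain ⟨hfrA, hfrne, hclC, hCA⟩ := hfrprop C hC
    obtain ⟨hfrA', hfrne', hclC', hCA'⟩ := hfrprop C' hC'
    rw [eq_empty_iff_forall_notMem]
    rintro y ⟨hy1, hy2⟩
    rw [hclC] at hy1; rw [hclC'] at hy2
    rcases hy1 with hy1 | hy1 <;> rcases hy2 with hy2 | hy2
    · -- y in both components => equal
      obtain ⟨x, hx, hCeq⟩ := hC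
      obtain ⟨x', hx', hCeq'⟩ := hC'
      have hyA : y ∉ A := hCA hy1
      have e1 : C = connectedComponentIn Aᶜ y := hCeq ▸ connectedComponentIn_eq (hCeq ▸ hy1)
      have e2 : C' = connectedComponentIn Aᶜ y := hCeq' ▸ connectedComponentIn_eq (hCeq' ▸ hy2)
      obtain ⟨z, hz⟩ := hfrne
      have hzfrA : z ∈ frontier A := hfrA hz
      rw [← hunion] at hzfrA
      rcases hzfrA with hzB | hzB
      · exact eq_empty_iff_forall_notMem.mp hCB1 z ⟨hz, hzB⟩
      · refine eq_empty_iff_forall_notMem.mp hCB2 z ⟨?_, hzB⟩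
        rw [e2, ← e1]; exact hz
    · exact hCA hy1 (hclA.frontier_subset (hfrA' hy2))
    · exact hCA' hy2 (hclA.frontier_subset (hfrA hy1))
    · have hyB2 : y ∈ B2 := by
        have := hfrA hy1; rw [← hunion] at this
        rcases this with h | h
        · exact absurd ⟨hy1, h⟩ (eq_empty_iff_forall_notMem.mp hCB1 y).elim
        · exact h
      have hyB1 : y ∈ B1 := by
        have := hfrA' hy2; rw [← hunion] at this
        rcases this with h | h
        · exact h
        · exact absurd ⟨hy2, h⟩ (eq_empty_iff_forall_notMem.mp hCB2 y).elim
      exact eq_empty_iff_forall_notMem.mp hdisj y ⟨hyB1, hyB2⟩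
  have hdich : ∀ x, x ∉ A → connectedComponentIn Aᶜ x ∈ S2 ∨ connectedComponentIn Aᶜ x ∈ S1 := by
    intro x hx
    have hCmem : connectedComponentIn Aᶜ x ∈ cSet A := ⟨x, hx, rfl⟩
    rcases h1 x hx with h | h
    · right
      refine ⟨hCmem, eq_empty_iff_forall_notMem.mpr fun z hz => ?_⟩
      exact eq_empty_iff_forall_notMem.mp hdisj z ⟨h hz.1, hz.2⟩
    · exact Or.inl ⟨hCmem, h⟩
  refine ⟨⟨?_, ?_, hA, hAne, ?_, ?_⟩, ?_, ?_, ?_⟩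
  · rw [hσ1]; exact side_regular hlc hA hAne hS2sub hS2fin
  · rw [hσ1]; exact hAne.mono subset_union_left
  · rw [hσ3]; exact side_regular hlc hA hAne hS1sub hS1fin
  · rw [hσ3]; exact hAne.mono subset_union_left
  · -- union is univ
    rw [hσ1, hσ3, eq_univ_iff_forall]
    intro x
    rcases em (x ∈ A) with hx | hx
    · exact Or.inl (Or.inl hx)
    · rcases hdich x hx with h | h
      · exact Or.inl (Or.inr (subset_closure (subset_sUnion_of_mem h
          (mem_connectedComponentIn hx))))
      · exact Or.inr (Or.inr (subset_closure (subset_sUnion_of_mem h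
          (mem_connectedComponentIn hx))))
  · -- A = intersection
    rw [hσ1, hσ3]
    apply subset_antisymm
    · exact subset_inter subset_union_left subset_union_left
    · rintro y ⟨hy1 | hy1, hy2 | hy2⟩
      · exact hy1
      · exact hy1
      · exact hy2
      · exfalso
        rw [hS2fin.closure_sUnion] at hy1
        rw [hS1fin.closure_sUnion] at hy2
        obtain ⟨C, hC, hyC⟩ := by simpa using hy1
        obtain ⟨C', hC', hyC'⟩ := by simpa using hy2
        exact eq_empty_iff_forall_notMem.mp (hkey C hC C' hC') y ⟨hyC, hyC'⟩
  · -- F3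
    rw [eq_empty_iff_forall_notMem]
    rintro y ⟨hy1, hy2⟩
    have hs1 : sideOf B1 A \ A ⊆ closure (⋃₀ S2) := by
      rw [hσ1]; rintro z ⟨hz1 | hz1, hz2⟩
      · exact absurd hz1 hz2
      · exact hz1
    have hs2 : sideOf B2 A \ A ⊆ closure (⋃₀ S1) := by
      rw [hσ3]; rintro z ⟨hz1 | hz1, hz2⟩
      · exact absurd hz1 hz2
      · exact hz1
    have hy1' : y ∈ closure (⋃₀ S2) := by
      have := closure_mono hs1 hy1; rwa [closure_closure] at this
    have hy2' : y ∈ closure (⋃₀ S1) := by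
      have := closure_mono hs2 hy2; rwa [closure_closure] at this
    rw [hS2fin.closure_sUnion] at hy1'
    rw [hS1fin.closure_sUnion] at hy2'
    obtain ⟨C, hC, hyC⟩ := by simpa using hy1'
    obtain ⟨C', hC', hyC'⟩ := by simpa using hy2'
    exact eq_empty_iff_forall_notMem.mp (hkey C hC C' hC') y ⟨hyC, hyC'⟩
end Core

/-- the sets σ_{B₁}(A), A, σ_{B₂}(A) satisfy (F1), (F2), (F3) of a simple fold. -/
theorem stmt7 (G : Type*) [TopologicalSpace G] [CompactSpace G] [T2Space G]
    [ConnectedSpace G] (hG : IsGraphSpace G)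
    (A B1 B2 : Set G) (hA : IsRegularSet A) (hAne : A.Nonempty)
    (hunion : B1 ∪ B2 = frontier A) (hdisj : B1 ∩ B2 = ∅)
    (h1 : ConsistentComplement A B1) (h2 : ConsistentComplement A B2) :
    (IsRegularSet (sideOf B1 A) ∧ (sideOf B1 A).Nonempty ∧
      IsRegularSet A ∧ A.Nonempty ∧
      IsRegularSet (sideOf B2 A) ∧ (sideOf B2 A).Nonempty) ∧
    sideOf B1 A ∪ sideOf B2 A = Set.univ ∧
    A = sideOf B1 A ∩ sideOf B2 A ∧
    closure (sideOf B1 A \ A) ∩ closure (sideOf B2 A \ A) = ∅ := by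
  obtain ⟨n, f, hf, hcov, hint⟩ := hG
  have hlc : LocallyConnectedSpace G := graph_locallyConnected hf hcov
  have hfin : (frontier A).Finite := frontier_A_finite hf hcov hint hA.1 hA.2.1
  have hcomp : (cSet A).Finite := cSet_finite hf hcov hint hA.1 hA.2.1
  exact stmt7_core hlc hA hAne hfin hcomp hunion hdisj h1 h2
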